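/- Suppose g ∈ C¹(ℝ∖{x₀}) ∩ C(ℝ) is supported in [x₀ − R, x₀ + R] with 0 < R ≤ 1 and satisfies |g^{(k)}(x)| ≤ ⟦g⟧₁ |x − x₀|^{γ−k} χ_R(x − x₀) for k = 0, 1 and x ≠ x₀, for some γ > 0. Then for every real s, |𝔄(g; s)| ≤ C |s|^{κ/2} R^{γ/2} ⟦g⟧₁, where κ = min{1, γ} and C depends only on γ. -/

import Mathlib

open Set MeasureTheory intervalIntegral Filter

noncomputable section

/-- The coefficient `𝔄(g; s) = (2π)⁻² ∫₀¹ [g(st) - (1-t)g(0) - t g(s)] / (t(1-t)) dt`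
for a real-valued function `g` and real `s`. -/
noncomputable def couA (g : ℝ → ℝ) (s : ℝ) : ℝ :=
  ((2 * Real.pi) ^ 2)⁻¹ *
    ∫ t in (0 : ℝ)..1, (g (s * t) - (1 - t) * g 0 - t * g s) / (t * (1 - t))

lemma rpow_add_le_add_rpow_real {u v p : ℝ} (hu : 0 ≤ u) (hv : 0 ≤ v) (hp : 0 ≤ p)
    (hp1 : p ≤ 1) : (u + v) ^ p ≤ u ^ p + v ^ p := by
  lift u to NNReal using hu
  lift v to NNReal using hv
  have h := NNReal.rpow_add_le_add_rpow u v hp hp1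
  exact_mod_cast h

lemma gm_aux {A c p q : ℝ} (hc : 0 ≤ c) (hp : 0 ≤ p) (hq : 0 ≤ q)
    (h1 : A ≤ c * (p * p)) (h2 : A ≤ c * (q * q)) : A ≤ c * (p * q) := by
  rcases le_total p q with h | h
  · exact h1.trans (by nlinarith [mul_nonneg (mul_nonneg hc hp) (sub_nonneg.2 h)])
  · exact h2.trans (by nlinarith [mul_nonneg (mul_nonneg hc hq) (sub_nonneg.2 h)])

lemma mono_aux {φ ψ : ℝ → ℝ} {a b : ℝ} (hab : a ≤ b)
    (hφ : ContinuousOn φ (Icc a b)) (hψ : ContinuousOn ψ (Icc a b))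
    (hd : ∀ x ∈ Ioo a b,
      DifferentiableAt ℝ φ x ∧ DifferentiableAt ℝ ψ x ∧ |deriv ψ x| ≤ deriv φ x) :
    |ψ b - ψ a| ≤ φ b - φ a := by
  have hIcc : interior (Icc a b) = Ioo a b := interior_Icc
  have h1 : MonotoneOn (fun x => φ x - ψ x) (Icc a b) := by
    apply monotoneOn_of_deriv_nonneg (convex_Icc a b) (hφ.sub hψ)
    · rw [hIcc]; intro x hx
      exact ((hd x hx).1.sub (hd x hx).2.1).differentiableWithinAt
    · rw [hIcc]; intro x hx
      rw [deriv_sub (hd x hx).1 (hd x hx).2.1]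
      linarith [(abs_le.1 (hd x hx).2.2).2]
  have h2 : MonotoneOn (fun x => φ x + ψ x) (Icc a b) := by
    apply monotoneOn_of_deriv_nonneg (convex_Icc a b) (hφ.add hψ)
    · rw [hIcc]; intro x hx
      exact ((hd x hx).1.add (hd x hx).2.1).differentiableWithinAt
    · rw [hIcc]; intro x hx
      rw [deriv_add (hd x hx).1 (hd x hx).2.1]
      linarith [(abs_le.1 (hd x hx).2.2).1]
  have ha : a ∈ Icc a b := ⟨le_rfl, hab⟩
  have hb : b ∈ Icc a b := ⟨hab, le_rfl⟩
  have e1 := h1 ha hb hab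
  have e2 := h2 ha hb hab
  simp only [] at e1 e2
  rw [abs_le]
  constructor <;> linarith

set_option maxHeartbeats 1000000 in
/-- Suppose `g ∈ C¹(ℝ∖{x₀}) ∩ C(ℝ)` is supported in `[x₀ - R, x₀ + R]`
with `0 < R ≤ 1` and satisfies `|g⁽ᵏ⁾(x)| ≤ M |x - x₀|^{γ-k} χ_R(x - x₀)` for `k = 0, 1`
and `x ≠ x₀`, for some `γ > 0` (so `M` bounds `⟦g⟧₁`).  Then for every real `s`,
`|𝔄(g; s)| ≤ C |s|^{κ/2} R^{γ/2} M` with `κ = min{1, γ}` and `C` depending only on `γ`. -/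
theorem statement11 (γ : ℝ) (hγ : 0 < γ) :
    ∃ C : ℝ, 0 < C ∧
      ∀ (g : ℝ → ℝ) (x₀ R M : ℝ), 0 < R → R ≤ 1 → 0 ≤ M →
        Continuous g → ContDiffOn ℝ 1 g {x₀}ᶜ →
        Function.support g ⊆ Set.Icc (x₀ - R) (x₀ + R) →
        (∀ k ≤ 1, ∀ x ≠ x₀, |x - x₀| < R →
          |iteratedDeriv k g x| ≤ M * |x - x₀| ^ (γ - (k : ℝ))) →
        (∀ k ≤ 1, ∀ x ≠ x₀, R ≤ |x - x₀| → iteratedDeriv k g x = 0) →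
        ∀ s : ℝ, |couA g s| ≤ C * |s| ^ (min 1 γ / 2) * R ^ (γ / 2) * M := by
  set κ := min 1 γ with hκdef
  have hκ0 : 0 < κ := lt_min one_pos hγ
  have hκ1 : κ ≤ 1 := min_le_left _ _
  have hκγ : κ ≤ γ := min_le_right _ _
  refine ⟨8 / κ ^ 2, by positivity, ?_⟩
  intro g x₀ R M hR hR1 hM hcont hC1 hsupp hbound hzero s
  have hMκ : (0:ℝ) ≤ 2 * M / κ := by positivity
  -- basic pointwise facts
  have hgabs : ∀ x ≠ x₀, |x - x₀| < R → |g x| ≤ M * |x - x₀| ^ γ := by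
    intro x hx hxR
    have := hbound 0 (by norm_num) x hx hxR
    simpa [iteratedDeriv_zero] using this
  have hgzero : ∀ x ≠ x₀, R ≤ |x - x₀| → g x = 0 := by
    intro x hx hxR
    have := hzero 0 (by norm_num) x hx hxR
    simpa [iteratedDeriv_zero] using this
  have hgx₀ : g x₀ = 0 := by
    have hev : ∀ᶠ x in nhds x₀, |x - x₀| < R := by
      filter_upwards [Metric.ball_mem_nhds x₀ hR] with x hx
      simpa [Real.dist_eq] using hx
    have t1 : Tendsto (fun x : ℝ => |x - x₀|) (nhds x₀) (nhds 0) := by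
      have : ContinuousAt (fun x : ℝ => |x - x₀|) x₀ := by fun_prop
      simpa using this.tendsto
    have t2 : Tendsto (fun y : ℝ => y ^ γ) (nhds 0) (nhds 0) := by
      simpa [Real.zero_rpow hγ.ne'] using
        (Real.continuousAt_rpow_const 0 γ (Or.inr hγ.le)).tendsto
    have h2 : Tendsto (fun x => M * |x - x₀| ^ γ) (nhds x₀) (nhds 0) := by
      have := Filter.Tendsto.const_mul M (t2.comp t1)
      simpa [Function.comp] using this
    have h1 : Tendsto g (nhdsWithin x₀ {x₀}ᶜ) (nhds 0) := by
      apply squeeze_zero_norm'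
      · filter_upwards [self_mem_nhdsWithin,
          eventually_nhdsWithin_of_eventually_nhds hev] with x hx hxR
        simpa [Real.norm_eq_abs] using hgabs x hx hxR
      · exact h2.mono_left nhdsWithin_le_nhds
    exact tendsto_nhds_unique ((hcont.tendsto x₀).mono_left nhdsWithin_le_nhds) h1
  have hgκ : ∀ x, |g x| ≤ M * |x - x₀| ^ κ := by
    intro x
    rcases eq_or_ne x x₀ with rfl | hx
    · simp [hgx₀, Real.zero_rpow hκ0.ne']
    rcases lt_or_ge (|x - x₀|) R with h | h
    · refine (hgabs x hx h).trans ?_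
      have hb0 : 0 < |x - x₀| := abs_pos.2 (sub_ne_zero.2 hx)
      have hb1 : |x - x₀| ≤ 1 := h.le.trans hR1
      exact mul_le_mul_of_nonneg_left (Real.rpow_le_rpow_of_exponent_ge hb0 hb1 hκγ) hM
    · rw [hgzero x hx h, abs_zero]
      positivity
  have hgsup : ∀ x, |g x| ≤ M * R ^ γ := by
    intro x
    rcases eq_or_ne x x₀ with rfl | hx
    · simp only [hgx₀, abs_zero]; positivity
    rcases lt_or_ge (|x - x₀|) R with h | h
    · refine (hgabs x hx h).trans ?_
      exact mul_le_mul_of_nonneg_left (Real.rpow_le_rpow (abs_nonneg _) h.le hγ.le) hM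
    · rw [hgzero x hx h, abs_zero]
      positivity
  have hderiv : ∀ x, x ≠ x₀ → |deriv g x| ≤ M * |x - x₀| ^ (κ - 1) := by
    intro x hx
    rcases lt_or_ge (|x - x₀|) R with h | h
    · have h1 := hbound 1 le_rfl x hx h
      rw [iteratedDeriv_one] at h1
      have hb0 : 0 < |x - x₀| := abs_pos.2 (sub_ne_zero.2 hx)
      have hb1 : |x - x₀| ≤ 1 := h.le.trans hR1
      refine h1.trans ?_
      have : |x - x₀| ^ (γ - (1:ℕ)) ≤ |x - x₀| ^ (κ - 1) := by
        apply Real.rpow_le_rpow_of_exponent_ge hb0 hb1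
        push_cast
        linarith
      exact mul_le_mul_of_nonneg_left this hM
    · have h1 := hzero 1 le_rfl x hx h
      rw [iteratedDeriv_one] at h1
      rw [h1, abs_zero]
      positivity
  have hdiff : ∀ x, x ≠ x₀ → DifferentiableAt ℝ g x := by
    intro x hx
    exact (hC1.contDiffAt (isOpen_compl_singleton.mem_nhds hx)).differentiableAt one_ne_zero
  -- Hölder estimate
  have key : ∀ a b : ℝ, a ≤ b → |g b - g a| ≤ 2 * M / κ * (b - a) ^ κ := by
    intro a b hab
    have hba : (0:ℝ) ≤ b - a := sub_nonneg.2 hab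
    have hpow : (0:ℝ) ≤ (b - a) ^ κ := Real.rpow_nonneg hba κ
    have hMκ' : (0:ℝ) ≤ M / κ := by positivity
    rcases le_or_gt x₀ a with hx₀a | hax₀
    · -- both points to the right of x₀
      have h1 : |g b - g a| ≤ (fun x => M / κ * (x - x₀) ^ κ) b -
          (fun x => M / κ * (x - x₀) ^ κ) a := by
        apply mono_aux hab ?_ hcont.continuousOn ?_
        · exact (continuous_const.mul ((Real.continuous_rpow_const hκ0.le).comp
            (continuous_id.sub continuous_const))).continuousOn
        · intro x hx
          have hx0 : x₀ < x := lt_of_le_of_lt hx₀a hx.1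
          have hxne : x - x₀ ≠ 0 := sub_ne_zero.2 (ne_of_gt hx0)
          have hdφ : HasDerivAt (fun x : ℝ => M / κ * (x - x₀) ^ κ)
              (M / κ * (κ * (x - x₀) ^ (κ - 1) * 1)) x :=
            by
              have := ((Real.hasDerivAt_rpow_const (x := x - x₀) (p := κ)
                (Or.inl hxne)).comp x ((hasDerivAt_id' x).sub_const x₀))
              exact HasDerivAt.const_mul _ this
          refine ⟨hdφ.differentiableAt, hdiff x (ne_of_gt hx0), ?_⟩
          rw [hdφ.deriv]
          have hd := hderiv x (ne_of_gt hx0)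
          rw [abs_of_pos (sub_pos.2 hx0)] at hd
          calc |deriv g x| ≤ M * (x - x₀) ^ (κ - 1) := hd
            _ = M / κ * (κ * (x - x₀) ^ (κ - 1) * 1) := by
                field_simp
      have h2 : (b - x₀) ^ κ ≤ (b - a) ^ κ + (a - x₀) ^ κ := by
        have := rpow_add_le_add_rpow_real hba (sub_nonneg.2 hx₀a) hκ0.le hκ1
        simpa [sub_add_sub_cancel] using this
      have h3 : (0:ℝ) ≤ (a - x₀) ^ κ := Real.rpow_nonneg (sub_nonneg.2 hx₀a) κ
      simp only [] at h1
      have : M / κ * (b - x₀) ^ κ - M / κ * (a - x₀) ^ κ ≤ M / κ * (b - a) ^ κ := by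
        nlinarith
      have h4 : (0:ℝ) ≤ M / κ * (b - a) ^ κ := by positivity
      have h6 : 2 * M / κ * (b - a) ^ κ =
          M / κ * (b - a) ^ κ + M / κ * (b - a) ^ κ := by ring
      calc |g b - g a| ≤ M / κ * (b - x₀) ^ κ - M / κ * (a - x₀) ^ κ := h1
        _ ≤ M / κ * (b - a) ^ κ := this
        _ ≤ 2 * M / κ * (b - a) ^ κ := by linarith
    rcases le_or_gt b x₀ with hbx₀ | hx₀b
    · -- both points to the left of x₀
      have h1 : |g b - g a| ≤ (fun x => -(M / κ * (x₀ - x) ^ κ)) b -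
          (fun x => -(M / κ * (x₀ - x) ^ κ)) a := by
        apply mono_aux hab ?_ hcont.continuousOn ?_
        · exact ((continuous_const.mul ((Real.continuous_rpow_const hκ0.le).comp
            (continuous_const.sub continuous_id))).neg).continuousOn
        · intro x hx
          have hx0 : x < x₀ := lt_of_lt_of_le hx.2 hbx₀
          have hxne : x₀ - x ≠ 0 := sub_ne_zero.2 (ne_of_gt (by linarith))
          have hdφ : HasDerivAt (fun x : ℝ => -(M / κ * (x₀ - x) ^ κ))
              (-(M / κ * (κ * (x₀ - x) ^ (κ - 1) * (-1)))) x :=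
            (HasDerivAt.const_mul _ (((Real.hasDerivAt_rpow_const (x := x₀ - x)
              (Or.inl hxne)).comp x (HasDerivAt.const_sub x₀ (hasDerivAt_id x))))).neg
          refine ⟨hdφ.differentiableAt, hdiff x (ne_of_lt hx0), ?_⟩
          rw [hdφ.deriv]
          have hd := hderiv x (ne_of_lt hx0)
          rw [abs_sub_comm, abs_of_pos (sub_pos.2 hx0)] at hd
          calc |deriv g x| ≤ M * (x₀ - x) ^ (κ - 1) := hd
            _ = -(M / κ * (κ * (x₀ - x) ^ (κ - 1) * (-1))) := by
                field_simp
      have h2 : (x₀ - a) ^ κ ≤ (b - a) ^ κ + (x₀ - b) ^ κ := by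
        have := rpow_add_le_add_rpow_real hba (sub_nonneg.2 hbx₀) hκ0.le hκ1
        simpa [sub_add_sub_cancel] using this
      have h3 : (0:ℝ) ≤ (x₀ - b) ^ κ := Real.rpow_nonneg (sub_nonneg.2 hbx₀) κ
      simp only [] at h1
      have h5 : (x₀ - a) ^ κ - (x₀ - b) ^ κ ≤ (b - a) ^ κ := by linarith
      have h6 : M / κ * ((x₀ - a) ^ κ - (x₀ - b) ^ κ) ≤ M / κ * (b - a) ^ κ :=
        mul_le_mul_of_nonneg_left h5 hMκ'
      have h7 : 2 * M / κ * (b - a) ^ κ =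
          M / κ * (b - a) ^ κ + M / κ * (b - a) ^ κ := by ring
      have h8 : 0 ≤ M / κ * (b - a) ^ κ := by positivity
      calc |g b - g a| ≤ -(M / κ * (x₀ - b) ^ κ) - -(M / κ * (x₀ - a) ^ κ) := h1
        _ = M / κ * ((x₀ - a) ^ κ - (x₀ - b) ^ κ) := by ring
        _ ≤ 2 * M / κ * (b - a) ^ κ := by linarith
    · -- straddling case
      have hga := hgκ a
      have hgb := hgκ b
      rw [abs_sub_comm, abs_of_pos (sub_pos.2 hax₀)] at hga
      rw [abs_of_pos (sub_pos.2 hx₀b)] at hgb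
      have h2 : (b - x₀) ^ κ ≤ (b - a) ^ κ :=
        Real.rpow_le_rpow (by linarith) (by linarith) hκ0.le
      have h3 : (x₀ - a) ^ κ ≤ (b - a) ^ κ :=
        Real.rpow_le_rpow (by linarith) (by linarith) hκ0.le
      have h4 : 2 * M ≤ 2 * M / κ := by
        rw [le_div_iff₀ hκ0]
        nlinarith
      calc |g b - g a| ≤ |g b| + |g a| := abs_sub _ _
        _ ≤ M * (b - a) ^ κ + M * (b - a) ^ κ := by
            have := mul_le_mul_of_nonneg_left h2 hM
            have := mul_le_mul_of_nonneg_left h3 hM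
            gcongr <;> [exact hgb.trans (by gcongr); exact hga.trans (by gcongr)]
        _ = 2 * M * (b - a) ^ κ := by ring
        _ ≤ 2 * M / κ * (b - a) ^ κ := mul_le_mul_of_nonneg_right h4 hpow
  have hH : ∀ a b : ℝ, |g b - g a| ≤ 2 * M / κ * |b - a| ^ κ := by
    intro a b
    rcases le_total a b with h | h
    · rw [abs_of_nonneg (sub_nonneg.2 h)]
      exact key a b h
    · rw [abs_sub_comm (g b), abs_sub_comm b]
      rw [abs_of_nonneg (sub_nonneg.2 h)]
      exact key b a h
  -- the case s = 0
  rcases eq_or_ne s 0 with rfl | hs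
  · have hz : couA g 0 = 0 := by
      unfold couA
      have hnum : ∀ t : ℝ, (g (0 * t) - (1 - t) * g 0 - t * g 0) / (t * (1 - t)) = 0 := by
        intro t
        have : g (0 * t) - (1 - t) * g 0 - t * g 0 = 0 := by
          rw [zero_mul]; ring
        rw [this, zero_div]
      simp only [hnum]
      simp
    rw [hz, abs_zero, Real.zero_rpow (by positivity : κ / 2 ≠ 0)]
    have : 8 / κ ^ 2 * 0 * R ^ (γ / 2) * M = 0 := by ring
    rw [this]
  -- main case
  have hsabs : 0 < |s| := abs_pos.2 hs
  set X := |s| ^ (κ / 2) with hX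
  set Y := R ^ (γ / 2) with hY
  have hX0 : 0 < X := Real.rpow_pos_of_pos hsabs _
  have hY0 : 0 < Y := Real.rpow_pos_of_pos hR _
  have eY : Y * Y = R ^ γ := by
    rw [hY, ← Real.rpow_add hR]; congr 1; ring
  set K := 2 * M / κ * (X * Y) with hK
  have hK0 : 0 ≤ K := by positivity
  set r := κ / 2 - 1 with hr
  have hr1 : -1 < r := by rw [hr]; linarith
  set f : ℝ → ℝ := fun t => (g (s * t) - (1 - t) * g 0 - t * g s) / (t * (1 - t)) with hf
  set B : ℝ → ℝ := fun t => K * (t ^ r + (1 - t) ^ r) with hB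
  -- pointwise bound
  have hpt : ∀ t ∈ Set.Ioc (0:ℝ) 1, |f t| ≤ B t := by
    intro t ht
    have hBnn : 0 ≤ B t := by
      have h1 : (0:ℝ) ≤ t ^ r := Real.rpow_nonneg ht.1.le _
      have h2 : (0:ℝ) ≤ (1 - t) ^ r := Real.rpow_nonneg (by linarith [ht.2]) _
      rw [hB]
      exact mul_nonneg hK0 (add_nonneg h1 h2)
    rcases eq_or_lt_of_le ht.2 with h1 | ht1
    · have : f t = 0 := by
        rw [hf, h1]
        simp
      rw [this, abs_zero]
      exact hBnn
    have ht0 : 0 < t := ht.1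
    have h1t : 0 < 1 - t := by linarith
    have hfeq : f t = (g (s * t) - g 0) / t + (g (s * t) - g s) / (1 - t) := by
      rw [hf]
      field_simp
      ring
    have step : ∀ y τ : ℝ, 0 < τ → |s * t - y| = |s| * τ →
        |g (s * t) - g y| ≤ K * τ ^ (κ / 2) := by
      intro y τ hτ habs
      have hH' := hH y (s * t)
      rw [habs] at hH'
      have eS : X * X = |s| ^ κ := by
        rw [hX, ← Real.rpow_add hsabs]; congr 1; ring
      have eT : τ ^ (κ / 2) * τ ^ (κ / 2) = τ ^ κ := by
        rw [← Real.rpow_add hτ]; congr 1; ring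
      have eX : X * τ ^ (κ / 2) * (X * τ ^ (κ / 2)) = (|s| * τ) ^ κ := by
        calc X * τ ^ (κ / 2) * (X * τ ^ (κ / 2))
            = (X * X) * (τ ^ (κ / 2) * τ ^ (κ / 2)) := by ring
          _ = |s| ^ κ * τ ^ κ := by rw [eS, eT]
          _ = (|s| * τ) ^ κ := (Real.mul_rpow (abs_nonneg s) hτ.le).symm
      have hub1 : |g (s * t) - g y| ≤ 2 * M / κ *
          ((X * τ ^ (κ / 2)) * (X * τ ^ (κ / 2))) := by
        rw [eX]; exact hH'
      have hub2 : |g (s * t) - g y| ≤ 2 * M / κ * (Y * Y) := by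
        rw [eY]
        have h4 : 2 * M ≤ 2 * M / κ := by
          rw [le_div_iff₀ hκ0]; nlinarith
        have hRγ : (0:ℝ) ≤ R ^ γ := Real.rpow_nonneg hR.le _
        calc |g (s * t) - g y| ≤ |g (s * t)| + |g y| := abs_sub _ _
          _ ≤ M * R ^ γ + M * R ^ γ := add_le_add (hgsup _) (hgsup _)
          _ = 2 * M * R ^ γ := by ring
          _ ≤ 2 * M / κ * R ^ γ := mul_le_mul_of_nonneg_right h4 hRγ
      have := gm_aux hMκ (by positivity) hY0.le hub1 hub2
      calc |g (s * t) - g y| ≤ 2 * M / κ * ((X * τ ^ (κ / 2)) * Y) := this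
        _ = K * τ ^ (κ / 2) := by rw [hK]; ring
    have hA1 := step 0 t ht0 (by rw [sub_zero, abs_mul, abs_of_pos ht0])
    have hA2 := step s (1 - t) h1t (by
      have : s * t - s = -(s * (1 - t)) := by ring
      rw [this, abs_neg, abs_mul, abs_of_pos h1t])
    have e3 : t ^ (κ / 2) / t = t ^ r := by
      rw [hr, Real.rpow_sub ht0, Real.rpow_one]
    have e4 : (1 - t) ^ (κ / 2) / (1 - t) = (1 - t) ^ r := by
      rw [hr, Real.rpow_sub h1t, Real.rpow_one]
    rw [hfeq]
    calc |(g (s * t) - g 0) / t + (g (s * t) - g s) / (1 - t)|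
        ≤ |(g (s * t) - g 0) / t| + |(g (s * t) - g s) / (1 - t)| := abs_add_le _ _
      _ = |g (s * t) - g 0| / t + |g (s * t) - g s| / (1 - t) := by
          rw [abs_div, abs_div, abs_of_pos ht0, abs_of_pos h1t]
      _ ≤ K * t ^ (κ / 2) / t + K * (1 - t) ^ (κ / 2) / (1 - t) := by gcongr
      _ = K * (t ^ r + (1 - t) ^ r) := by
          rw [← e3, ← e4]; ring
      _ = B t := by simp only [hB]
  -- integrability
  have hint1 : IntervalIntegrable (fun t : ℝ => t ^ r) volume 0 1 :=
    intervalIntegral.intervalIntegrable_rpow' hr1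
  have hint2 : IntervalIntegrable (fun t : ℝ => (1 - t) ^ r) volume 0 1 := by
    have := ((intervalIntegral.intervalIntegrable_rpow' (a := 0) (b := 1) hr1).comp_sub_left
      1).symm
    simpa using this
  have hintB : IntervalIntegrable B volume 0 1 := by
    rw [hB]
    exact (hint1.add hint2).const_mul K
  have hmeas : AEStronglyMeasurable f (volume.restrict (Set.uIoc (0:ℝ) 1)) := by
    have hnum : Continuous fun t : ℝ => g (s * t) - (1 - t) * g 0 - t * g s := by fun_prop
    have hden : Continuous fun t : ℝ => t * (1 - t) := by fun_prop
    have hm : Measurable f := by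
      rw [hf]
      exact hnum.measurable.div hden.measurable
    exact hm.aestronglyMeasurable
  have haebound : (fun t => ‖f t‖) ≤ᵐ[volume.restrict (Set.uIoc (0:ℝ) 1)] B := by
    rw [Set.uIoc_of_le (by norm_num : (0:ℝ) ≤ 1)]
    filter_upwards [ae_restrict_mem measurableSet_Ioc] with t ht
    simpa [Real.norm_eq_abs] using hpt t ht
  have hintf : IntervalIntegrable f volume 0 1 := hintB.mono_fun' hmeas haebound
  -- integral bound
  have hBat0 : |f 0| ≤ B 0 := by
    have hf0 : f 0 = 0 := by rw [hf]; simp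
    rw [hf0, abs_zero, hB]
    have h1 : (0:ℝ) ≤ (0:ℝ) ^ r := Real.rpow_nonneg le_rfl _
    have h2 : (0:ℝ) ≤ ((1:ℝ) - 0) ^ r := Real.rpow_nonneg (by norm_num) _
    exact mul_nonneg hK0 (add_nonneg h1 h2)
  have hboundInt : |∫ t in (0:ℝ)..1, f t| ≤ ∫ t in (0:ℝ)..1, B t := by
    calc |∫ t in (0:ℝ)..1, f t| ≤ ∫ t in (0:ℝ)..1, |f t| :=
        intervalIntegral.abs_integral_le_integral_abs (by norm_num)
      _ ≤ ∫ t in (0:ℝ)..1, B t := by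
        apply intervalIntegral.integral_mono_on (by norm_num) hintf.abs hintB
        intro t ht
        rcases eq_or_lt_of_le ht.1 with h0 | h0
        · rw [← h0]; exact hBat0
        · exact hpt t ⟨h0, ht.2⟩
  -- computing the integral of B
  have hr0 : r + 1 = κ / 2 := by rw [hr]; ring
  have hIr : ∫ t in (0:ℝ)..1, t ^ r = (κ / 2)⁻¹ := by
    rw [integral_rpow (Or.inl hr1), Real.one_rpow,
      Real.zero_rpow (by rw [hr0]; positivity), hr0]
    simp [one_div]
  have hI2 : ∫ t in (0:ℝ)..1, (1 - t) ^ r = (κ / 2)⁻¹ := by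
    rw [intervalIntegral.integral_comp_sub_left (fun u : ℝ => u ^ r) 1]
    norm_num [hIr]
  have hIB : ∫ t in (0:ℝ)..1, B t = K * (2 * (κ / 2)⁻¹) := by
    simp only [hB]
    rw [intervalIntegral.integral_const_mul,
      intervalIntegral.integral_add hint1 hint2, hIr, hI2]
    ring
  -- final assembly
  have hπ : ((2 * Real.pi) ^ 2)⁻¹ ≤ 1 := by
    rw [inv_le_one_iff₀]
    right
    nlinarith [Real.pi_gt_three]
  have hfin : |couA g s| ≤ K * (2 * (κ / 2)⁻¹) := by
    unfold couA
    rw [abs_mul, abs_of_nonneg (by positivity : (0:ℝ) ≤ ((2 * Real.pi) ^ 2)⁻¹)]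
    calc ((2 * Real.pi) ^ 2)⁻¹ * |∫ t in (0:ℝ)..1, f t|
        ≤ 1 * |∫ t in (0:ℝ)..1, f t| :=
          mul_le_mul_of_nonneg_right hπ (abs_nonneg _)
      _ = |∫ t in (0:ℝ)..1, f t| := one_mul _
      _ ≤ ∫ t in (0:ℝ)..1, B t := hboundInt
      _ = K * (2 * (κ / 2)⁻¹) := hIB
  refine hfin.trans (le_of_eq ?_)
  rw [hK]
  field_simp
  ring

end
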